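/- Let (D_n)_{n∈ℕ} be a countable family of dense subsets of 2^{<ℕ} × 2^{<ℕ} and let g₁ : ℕ → 2^{<ℕ} be any function with g₁(n) nonempty for all n. Define k₀ = 0 and k_{n+1} = k_n + |g₁(k_n)|. Then for any countable family (E_n)_{n∈ℕ} of dense subsets of 2^{<ℕ}, there exist reals x, y ∈ 2^ℕ such that both x and y meet every E_n, and for every n, either x restricted to the interval [k_n, k_{n+1}) equals g₁(k_n) or y restricted to [k_n, k_{n+1}) equals g₁(k_n). -/
import Mathlib


/-- The initial segment `x↾n` of a real `x ∈ 2^ℕ`, as a binary string. -/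
def restrictSeq (x : ℕ → Bool) (n : ℕ) : List Bool := List.ofFn (fun i : Fin n => x i)

/-- A set of strings is dense if every string has an extension in it. -/
def DenseStr (D : Set (List Bool)) : Prop := ∀ σ : List Bool, ∃ τ, σ <+: τ ∧ τ ∈ D

/-- A real meets a set of strings if some initial segment of it lies in the set. -/
def MeetsReal (x : ℕ → Bool) (A : Set (List Bool)) : Prop := ∃ n, restrictSeq x n ∈ A

/-- A real avoids a set of strings if no extension of some initial segment lies in the set. -/
def AvoidsReal (x : ℕ → Bool) (A : Set (List Bool)) : Prop :=
  ∃ n, ∀ τ, restrictSeq x n <+: τ → τ ∉ A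

/-- A set of pairs of strings is dense if every pair has a coordinatewise extension in it. -/
def DensePair (D : Set (List Bool × List Bool)) : Prop :=
  ∀ σ τ : List Bool, ∃ σ' τ', σ <+: σ' ∧ τ <+: τ' ∧ (σ', τ') ∈ D

/-- A pair of strings meets a set of pairs of strings if a pair of initial segments lies in it. -/
def MeetsPairStr (α β : List Bool) (D : Set (List Bool × List Bool)) : Prop :=
  ∃ α' β', α' <+: α ∧ β' <+: β ∧ (α', β') ∈ D

/-- A pair of reals meets a set of pairs of strings if a pair of initial segments lies in it. -/
def MeetsPairReal (x y : ℕ → Bool) (D : Set (List Bool × List Bool)) : Prop :=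
  ∃ a b, (restrictSeq x a, restrictSeq y b) ∈ D

/-- `x` agrees with the string `s` on the interval `[k, k + |s|)`. -/
def AgreesOn (x : ℕ → Bool) (k : ℕ) (s : List Bool) : Prop :=
  ∀ i, (h : i < s.length) → x (k + i) = s[i]

/- ------------------ auxiliary machinery ------------------ -/

/-- Index of the block containing position `p`. -/
noncomputable def jpAux (k : ℕ → ℕ) (p : ℕ) : ℕ :=
  Nat.findGreatest (fun j => k j ≤ p) p

/-- The canonical "block value" at position `p`: the bit prescribed by `g₁` on the block
containing `p`. -/
noncomputable def blockValAux (g₁ : ℕ → List Bool) (k : ℕ → ℕ) (p : ℕ) : Bool :=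
  (g₁ (k (jpAux k p))).getD (p - k (jpAux k p)) false

/-- Extend a string by `t` bits using the canonical block values. -/
noncomputable def padAux (g₁ : ℕ → List Bool) (k : ℕ → ℕ) (l : List Bool) (t : ℕ) : List Bool :=
  l ++ List.ofFn (fun i : Fin t => blockValAux g₁ k (l.length + i))

lemma padAux_length (g₁ : ℕ → List Bool) (k : ℕ → ℕ) (l : List Bool) (t : ℕ) :
    (padAux g₁ k l t).length = l.length + t := by simp [padAux]

lemma padAux_prefix (g₁ : ℕ → List Bool) (k : ℕ → ℕ) (l : List Bool) (t : ℕ) :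
    l <+: padAux g₁ k l t := List.prefix_append _ _

lemma padAux_getD (g₁ : ℕ → List Bool) (k : ℕ → ℕ) (l : List Bool) (t : ℕ) (p : ℕ)
    (h1 : l.length ≤ p) (h2 : p < l.length + t) :
    (padAux g₁ k l t).getD p false = blockValAux g₁ k p := by
  have hlt : p < (padAux g₁ k l t).length := by rw [padAux_length]; exact h2
  rw [List.getD_eq_getElem _ _ hlt]
  unfold padAux at hlt ⊢
  rw [List.getElem_append_right h1, List.getElem_ofFn]
  congr 1
  simp only [Fin.val_mk]
  omega

lemma getD_of_prefix {l₁ l₂ : List Bool} (h : l₁ <+: l₂) {p : ℕ} (hp : p < l₁.length) :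
    l₂.getD p false = l₁.getD p false := by
  rw [List.getD_eq_getElem _ _ hp, List.getD_eq_getElem _ _ (hp.trans_le h.length_le)]
  exact (h.getElem hp).symm

lemma jpAux_eq {k : ℕ → ℕ} (hk : StrictMono k) {n p : ℕ} (h1 : k n ≤ p) (h2 : p < k (n + 1)) :
    jpAux k p = n := by
  classical
  rw [jpAux, Nat.findGreatest_eq_iff]
  refine ⟨le_trans hk.le_apply h1, fun _ => h1, fun m hm _ hkm => ?_⟩
  exact absurd (lt_of_lt_of_le h2 (hk.monotone hm)) (not_lt.mpr hkm)

lemma blockValAux_eq (g₁ : ℕ → List Bool) {k : ℕ → ℕ} (hk : StrictMono k) {n p : ℕ}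
    (h1 : k n ≤ p) (h2 : p < k (n + 1)) :
    blockValAux g₁ k p = (g₁ (k n)).getD (p - k n) false := by
  rw [blockValAux, jpAux_eq hk h1 h2]

/-- Construction lemma: there are reals `x, y` each meeting every dense set `E_n`, such that
for every `n` one of `x, y` copies the block `g₁(k_n)` on the interval `[k_n, k_{n+1})`. -/
theorem stmt_4 (D : ℕ → Set (List Bool × List Bool)) (hD : ∀ n, DensePair (D n))
    (g₁ : ℕ → List Bool) (hg₁ : ∀ n, g₁ n ≠ [])
    (k : ℕ → ℕ) (hk0 : k 0 = 0) (hks : ∀ n, k (n + 1) = k n + (g₁ (k n)).length)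
    (E : ℕ → Set (List Bool)) (hE : ∀ n, DenseStr (E n)) :
    ∃ x y : ℕ → Bool,
      (∀ n, MeetsReal x (E n)) ∧ (∀ n, MeetsReal y (E n)) ∧
      ∀ n, AgreesOn x (k n) (g₁ (k n)) ∨ AgreesOn y (k n) (g₁ (k n)) := by
  classical
  have hklt : ∀ n, k n < k (n + 1) := by
    intro n
    have := List.length_pos_iff.mpr (hg₁ (k n))
    rw [hks]; omega
  have hkmono : StrictMono k := strictMono_nat_of_lt_succ hklt
  -- one step of the construction
  have step : ∀ (n : ℕ) (α β : List Bool) (m : ℕ), α.length = k m → β.length = k m →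
      ∃ (α' β' : List Bool) (m' : ℕ), m < m' ∧ α'.length = k m' ∧ β'.length = k m' ∧
        α <+: α' ∧ β <+: β' ∧ (∃ τ ∈ E n, τ <+: α') ∧ (∃ τ ∈ E n, τ <+: β') ∧
        ∀ j, m ≤ j → j < m' →
          (∀ p, k j ≤ p → p < k (j + 1) → α'.getD p false = blockValAux g₁ k p) ∨
          (∀ p, k j ≤ p → p < k (j + 1) → β'.getD p false = blockValAux g₁ k p) := by
    intro n α β m hα hβ
    obtain ⟨τ, hτpre, hτE⟩ := hE n α
    set a := max (m + 1) τ.length with ha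
    have hma : m < a := lt_of_lt_of_le (Nat.lt_succ_self m) (le_max_left _ _)
    have hτa : τ.length ≤ k a :=
      le_trans hkmono.le_apply (hkmono.monotone (le_max_right _ _))
    have hmka : k m ≤ k a := hkmono.monotone hma.le
    set α₁ := padAux g₁ k τ (k a - τ.length) with hα₁
    have hα₁len : α₁.length = k a := by rw [hα₁, padAux_length]; omega
    set β₁ := padAux g₁ k β (k a - k m) with hβ₁
    have hβ₁len : β₁.length = k a := by rw [hβ₁, padAux_length, hβ]; omega
    obtain ⟨τ', hτ'pre, hτ'E⟩ := hE n β₁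
    set m' := max (a + 1) τ'.length with hm'
    have ham' : a < m' := lt_of_lt_of_le (Nat.lt_succ_self a) (le_max_left _ _)
    have hτ'm' : τ'.length ≤ k m' :=
      le_trans hkmono.le_apply (hkmono.monotone (le_max_right _ _))
    have hkam' : k a ≤ k m' := hkmono.monotone ham'.le
    set β' := padAux g₁ k τ' (k m' - τ'.length) with hβ'
    have hβ'len : β'.length = k m' := by rw [hβ', padAux_length]; omega
    set α' := padAux g₁ k α₁ (k m' - k a) with hα'
    have hα'len : α'.length = k m' := by rw [hα', padAux_length, hα₁len]; omega
    refine ⟨α', β', m', hma.trans ham', hα'len, hβ'len,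
      hτpre.trans ((padAux_prefix g₁ k τ _).trans (padAux_prefix g₁ k α₁ _)),
      ((padAux_prefix g₁ k β _).trans (hτ'pre.trans (padAux_prefix g₁ k τ' _))),
      ⟨τ, hτE, (padAux_prefix g₁ k τ _).trans (padAux_prefix g₁ k α₁ _)⟩,
      ⟨τ', hτ'E, padAux_prefix g₁ k τ' _⟩, ?_⟩
    intro j hmj hjm'
    rcases lt_or_ge j a with hja | haj
    · right
      intro p hp1 hp2
      have hpa : p < k a := lt_of_lt_of_le hp2 (hkmono.monotone hja)
      have hpm : k m ≤ p := le_trans (hkmono.monotone hmj) hp1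
      have hb1 : β₁.getD p false = blockValAux g₁ k p := by
        rw [hβ₁]
        exact padAux_getD g₁ k β _ p (by omega) (by rw [hβ]; omega)
      have hpre : β₁ <+: β' := hτ'pre.trans (padAux_prefix g₁ k τ' _)
      rw [getD_of_prefix hpre (by rw [hβ₁len]; exact hpa)]
      exact hb1
    · left
      intro p hp1 hp2
      have hap : k a ≤ p := le_trans (hkmono.monotone haj) hp1
      have hpm' : p < k m' := lt_of_lt_of_le hp2 (hkmono.monotone hjm')
      rw [hα']
      exact padAux_getD g₁ k α₁ _ p (by rw [hα₁len]; exact hap) (by rw [hα₁len]; omega)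
  -- package the step into a function on states
  have step' : ∀ (n : ℕ)
      (s : {s : List Bool × List Bool × ℕ // s.1.length = k s.2.2 ∧ s.2.1.length = k s.2.2}),
      ∃ s' : {s : List Bool × List Bool × ℕ // s.1.length = k s.2.2 ∧ s.2.1.length = k s.2.2},
        s.1.2.2 < s'.1.2.2 ∧ s.1.1 <+: s'.1.1 ∧ s.1.2.1 <+: s'.1.2.1 ∧
        (∃ τ ∈ E n, τ <+: s'.1.1) ∧ (∃ τ ∈ E n, τ <+: s'.1.2.1) ∧
        ∀ j, s.1.2.2 ≤ j → j < s'.1.2.2 →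
          (∀ p, k j ≤ p → p < k (j + 1) → s'.1.1.getD p false = blockValAux g₁ k p) ∨
          (∀ p, k j ≤ p → p < k (j + 1) → s'.1.2.1.getD p false = blockValAux g₁ k p) := by
    rintro n ⟨⟨α, β, m⟩, hα, hβ⟩
    obtain ⟨α', β', m', h1, h2, h3, h4, h5, h6, h7, h8⟩ := step n α β m hα hβ
    exact ⟨⟨(α', β', m'), h2, h3⟩, h1, h4, h5, h6, h7, h8⟩
  choose f hf1 hf2 hf3 hf4 hf5 hf6 using step'
  obtain ⟨F, hF0, hFs⟩ :
      ∃ F : ℕ → {s : List Bool × List Bool × ℕ // s.1.length = k s.2.2 ∧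
        s.2.1.length = k s.2.2},
        F 0 = ⟨([], [], 0), by simp [hk0]⟩ ∧ ∀ n, F (n + 1) = f n (F n) :=
    ⟨fun n => Nat.rec ⟨([], [], 0), by simp [hk0]⟩ (fun n s => f n s) n, rfl, fun n => rfl⟩
  have hMlt : ∀ n, (F n).1.2.2 < (F (n + 1)).1.2.2 := fun n => by
    rw [hFs]; exact hf1 n (F n)
  have hMn : ∀ n, n ≤ (F n).1.2.2 := by
    intro n
    induction n with
    | zero => exact Nat.zero_le _
    | succ n ih => exact Nat.succ_le_of_lt (lt_of_le_of_lt ih (hMlt n))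
  have hApre : ∀ n, (F n).1.1 <+: (F (n + 1)).1.1 := fun n => by
    rw [hFs]; exact hf2 n (F n)
  have hBpre : ∀ n, (F n).1.2.1 <+: (F (n + 1)).1.2.1 := fun n => by
    rw [hFs]; exact hf3 n (F n)
  have hAchain : ∀ i j, i ≤ j → (F i).1.1 <+: (F j).1.1 := by
    intro i j hij
    induction j, hij using Nat.le_induction with
    | base => exact List.prefix_refl _
    | succ j hij ih => exact ih.trans (hApre j)
  have hBchain : ∀ i j, i ≤ j → (F i).1.2.1 <+: (F j).1.2.1 := by
    intro i j hij
    induction j, hij using Nat.le_induction with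
    | base => exact List.prefix_refl _
    | succ j hij ih => exact ih.trans (hBpre j)
  have hAlen : ∀ n, ((F n).1.1).length = k ((F n).1.2.2) := fun n => (F n).2.1
  have hBlen : ∀ n, ((F n).1.2.1).length = k ((F n).1.2.2) := fun n => (F n).2.2
  have hAbig : ∀ n, n ≤ ((F n).1.1).length := fun n => by
    rw [hAlen]; exact le_trans (hMn n) hkmono.le_apply
  have hBbig : ∀ n, n ≤ ((F n).1.2.1).length := fun n => by
    rw [hBlen]; exact le_trans (hMn n) hkmono.le_apply
  -- stability of values along the chain
  have hstab : ∀ (G : ℕ → List Bool), (∀ i j, i ≤ j → G i <+: G j) →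
      (∀ n, n ≤ (G n).length) →
      ∀ n p, p < (G n).length → (G n).getD p false = (G (p + 1)).getD p false := by
    intro G hchain hbig n p hp
    rcases le_total n (p + 1) with h | h
    · exact (getD_of_prefix (hchain n (p + 1) h) hp).symm
    · exact getD_of_prefix (hchain (p + 1) n h)
        (lt_of_lt_of_le (Nat.lt_succ_self p) (hbig (p + 1)))
  refine ⟨fun p => ((F (p + 1)).1.1).getD p false, fun p => ((F (p + 1)).1.2.1).getD p false,
    ?_, ?_, ?_⟩
  · -- x meets every E n
    intro n
    obtain ⟨τ, hτE, hτpre⟩ := hf4 n (F n)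
    rw [← hFs n] at hτpre
    refine ⟨τ.length, ?_⟩
    have hre : restrictSeq (fun p => ((F (p + 1)).1.1).getD p false) τ.length = τ := by
      apply List.ext_getElem
      · simp [restrictSeq]
      · intro p h1 h2
        simp only [restrictSeq, List.getElem_ofFn]
        have hpτ : p < τ.length := h2
        have hplen : p < ((F (n + 1)).1.1).length := lt_of_lt_of_le hpτ hτpre.length_le
        rw [← hstab _ hAchain hAbig (n + 1) p hplen, getD_of_prefix hτpre hpτ,
          List.getD_eq_getElem _ _ hpτ]
    rw [hre]; exact hτE
  · -- y meets every E n
    intro n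
    obtain ⟨τ, hτE, hτpre⟩ := hf5 n (F n)
    rw [← hFs n] at hτpre
    refine ⟨τ.length, ?_⟩
    have hre : restrictSeq (fun p => ((F (p + 1)).1.2.1).getD p false) τ.length = τ := by
      apply List.ext_getElem
      · simp [restrictSeq]
      · intro p h1 h2
        simp only [restrictSeq, List.getElem_ofFn]
        have hpτ : p < τ.length := h2
        have hplen : p < ((F (n + 1)).1.2.1).length := lt_of_lt_of_le hpτ hτpre.length_le
        rw [← hstab _ hBchain hBbig (n + 1) p hplen, getD_of_prefix hτpre hpτ,
          List.getD_eq_getElem _ _ hpτ]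
    rw [hre]; exact hτE
  · -- each block is copied by x or by y
    intro j
    set n := Nat.findGreatest (fun i => (F i).1.2.2 ≤ j) j with hn
    have hP0 : (F 0).1.2.2 ≤ j := by rw [hF0]; exact Nat.zero_le j
    have hn1 : (F n).1.2.2 ≤ j :=
      Nat.findGreatest_spec (P := fun i => (F i).1.2.2 ≤ j) (Nat.zero_le j) hP0
    have hn2 : j < (F (n + 1)).1.2.2 := by
      rcases lt_or_ge j ((F (n + 1)).1.2.2) with h | h
      · exact h
      · exfalso
        refine Nat.findGreatest_is_greatest (P := fun i => (F i).1.2.2 ≤ j) (n := j)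
          ?_ (le_trans (hMn (n + 1)) h) h
        rw [← hn]; exact Nat.lt_succ_self n
    have hn2' := hn2
    rw [hFs] at hn2'
    have hdis := hf6 n (F n) j hn1 hn2'
    rw [← hFs n] at hdis
    have hjM : j + 1 ≤ (F (n + 1)).1.2.2 := hn2
    rcases hdis with h | h
    · left
      intro i hi
      have hp1 : k j ≤ k j + i := Nat.le_add_right _ _
      have hp2 : k j + i < k (j + 1) := by rw [hks]; omega
      have hval := h (k j + i) hp1 hp2
      have hplen : k j + i < ((F (n + 1)).1.1).length := by
        rw [hAlen]; exact lt_of_lt_of_le hp2 (hkmono.monotone hjM)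
      show ((F (k j + i + 1)).1.1).getD (k j + i) false = (g₁ (k j))[i]
      rw [← hstab _ hAchain hAbig (n + 1) _ hplen, hval,
        blockValAux_eq g₁ hkmono hp1 hp2, Nat.add_sub_cancel_left,
        List.getD_eq_getElem _ _ hi]
    · right
      intro i hi
      have hp1 : k j ≤ k j + i := Nat.le_add_right _ _
      have hp2 : k j + i < k (j + 1) := by rw [hks]; omega
      have hval := h (k j + i) hp1 hp2
      have hplen : k j + i < ((F (n + 1)).1.2.1).length := by
        rw [hBlen]; exact lt_of_lt_of_le hp2 (hkmono.monotone hjM)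
      show ((F (k j + i + 1)).1.2.1).getD (k j + i) false = (g₁ (k j))[i]
      rw [← hstab _ hBchain hBbig (n + 1) _ hplen, hval,
        blockValAux_eq g₁ hkmono hp1 hp2, Nat.add_sub_cancel_left,
        List.getD_eq_getElem _ _ hi]
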